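/- Let A = (Σ, Q, I, F, δ) be a complete NBA. The saturation relation S(⊑^{bw-di}, ⊒^{bw-di}) — i.e., ((p,σ,r), (p′,σ,r′)) ∈ S iff p ⊑^{bw-di} p′ and r′ ⊑^{bw-di} r — is good for saturation: adding every transition (p,σ,r) for which there exists a transition (p′,σ,r′) ∈ δ with p ⊑^{bw-di} p′ and r′ ⊑^{bw-di} r preserves the language, that is, L(Sat(A, S(⊑^{bw-di}, ⊒^{bw-di}))) = L(A). -/

import Mathlib

/-- A nondeterministic automaton (used both as NBA and NFA):
initial states, accepting states, and a transition relation. -/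
structure NA (A : Type*) (Q : Type*) where
  ini : Set Q
  acc : Set Q
  trans : Set (Q × A × Q)

namespace NA

variable {A Q Q₁ Q₂ : Type*}

/-- Forward and backward completeness. -/
def Complete (M : NA A Q) : Prop :=
  ∀ (p : Q) (a : A), (∃ q, (q, a, p) ∈ M.trans) ∧ (∃ q, (p, a, q) ∈ M.trans)

/-- Infinite run on an infinite word. -/
def InfRun (M : NA A Q) (w : ℕ → A) (π : ℕ → Q) : Prop :=
  ∀ i, (π i, w i, π (i + 1)) ∈ M.trans

/-- Fairness: accepting states are visited infinitely often. -/
def Fair (M : NA A Q) (π : ℕ → Q) : Prop :=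
  ∀ n, ∃ m, n ≤ m ∧ π m ∈ M.acc

/-- The ω-language of a Büchi automaton. -/
def BuchiLang (M : NA A Q) : Set (ℕ → A) :=
  {w | ∃ π, π 0 ∈ M.ini ∧ M.InfRun w π ∧ M.Fair π}

/-- Finite run on a finite word (only the first `w.length + 1` values of `π` matter). -/
def FinRun (M : NA A Q) (w : List A) (π : ℕ → Q) : Prop :=
  ∀ (i : ℕ) (h : i < w.length), (π i, w.get ⟨i, h⟩, π (i + 1)) ∈ M.trans

/-- The finite-word language of an NFA. -/
def FinLang (M : NA A Q) : Set (List A) :=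
  {w | ∃ π, π 0 ∈ M.ini ∧ M.FinRun w π ∧ π w.length ∈ M.acc}

/-- Direct (forward) trace inclusion. -/
def DiTraceIncl (M : NA A Q₁) (N : NA A Q₂) (p : Q₁) (q : Q₂) : Prop :=
  ∀ (w : ℕ → A) (π : ℕ → Q₁), π 0 = p → M.InfRun w π →
    ∃ ρ : ℕ → Q₂, ρ 0 = q ∧ N.InfRun w ρ ∧ ∀ i, π i ∈ M.acc → ρ i ∈ N.acc

/-- Fair trace inclusion. -/
def FairTraceIncl (M : NA A Q₁) (N : NA A Q₂) (p : Q₁) (q : Q₂) : Prop :=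
  ∀ (w : ℕ → A) (π : ℕ → Q₁), π 0 = p → M.InfRun w π →
    ∃ ρ : ℕ → Q₂, ρ 0 = q ∧ N.InfRun w ρ ∧ (M.Fair π → N.Fair ρ)

/-- Backward direct trace inclusion. -/
def BwDiTraceIncl (M : NA A Q₁) (N : NA A Q₂) (p : Q₁) (q : Q₂) : Prop :=
  ∀ (w : List A) (π : ℕ → Q₁), π 0 ∈ M.ini → M.FinRun w π → π w.length = p →
    ∃ ρ : ℕ → Q₂, ρ 0 ∈ N.ini ∧ N.FinRun w ρ ∧ ρ w.length = q ∧
      ∀ i, i ≤ w.length → π i ∈ M.acc → ρ i ∈ N.acc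

/-- Forward finite trace inclusion. -/
def FwFinTraceIncl (M : NA A Q₁) (N : NA A Q₂) (p : Q₁) (q : Q₂) : Prop :=
  ∀ (w : List A) (π : ℕ → Q₁), π 0 = p → M.FinRun w π → π w.length ∈ M.acc →
    ∃ ρ : ℕ → Q₂, ρ 0 = q ∧ N.FinRun w ρ ∧ ρ w.length ∈ N.acc

/-- Backward finite trace inclusion. -/
def BwFinTraceIncl (M : NA A Q₁) (N : NA A Q₂) (p : Q₁) (q : Q₂) : Prop :=
  ∀ (w : List A) (π : ℕ → Q₁), π 0 ∈ M.ini → M.FinRun w π → π w.length = p →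
    ∃ ρ : ℕ → Q₂, ρ 0 ∈ N.ini ∧ N.FinRun w ρ ∧ ρ w.length = q

/-- Counting backward trace inclusion: the matching initial trace visits
accepting states at least as often. -/
def CountBwTraceIncl (M : NA A Q) (p q : Q) : Prop :=
  ∀ (w : List A) (π : ℕ → Q), π 0 ∈ M.ini → M.FinRun w π → π w.length = p →
    ∃ ρ : ℕ → Q, ρ 0 ∈ M.ini ∧ M.FinRun w ρ ∧ ρ w.length = q ∧
      {i | i ≤ w.length ∧ π i ∈ M.acc}.ncard ≤ {i | i ≤ w.length ∧ ρ i ∈ M.acc}.ncard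

/-- `R` is a direct forward simulation. -/
def IsDiSim (M : NA A Q₁) (N : NA A Q₂) (R : Q₁ → Q₂ → Prop) : Prop :=
  ∀ p q, R p q → (p ∈ M.acc → q ∈ N.acc) ∧
    ∀ a p', (p, a, p') ∈ M.trans → ∃ q', (q, a, q') ∈ N.trans ∧ R p' q'

/-- Direct forward simulation (the largest direct forward simulation). -/
def DiSim (M : NA A Q₁) (N : NA A Q₂) (p : Q₁) (q : Q₂) : Prop :=
  ∃ R, IsDiSim M N R ∧ R p q

/-- `R` is a backward direct simulation (matching accepting and initial states). -/
def IsBwDiSim (M : NA A Q₁) (N : NA A Q₂) (R : Q₁ → Q₂ → Prop) : Prop :=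
  ∀ p q, R p q → (p ∈ M.acc → q ∈ N.acc) ∧ (p ∈ M.ini → q ∈ N.ini) ∧
    ∀ a p', (p', a, p) ∈ M.trans → ∃ q', (q', a, q) ∈ N.trans ∧ R p' q'

/-- Backward direct simulation (the largest backward direct simulation). -/
def BwDiSim (M : NA A Q₁) (N : NA A Q₂) (p : Q₁) (q : Q₂) : Prop :=
  ∃ R, IsBwDiSim M N R ∧ R p q

/-- `R` is a backward finite-word simulation (matching only initial states). -/
def IsBwSim (M : NA A Q₁) (N : NA A Q₂) (R : Q₁ → Q₂ → Prop) : Prop :=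
  ∀ p q, R p q → (p ∈ M.ini → q ∈ N.ini) ∧
    ∀ a p', (p', a, p) ∈ M.trans → ∃ q', (q', a, q) ∈ N.trans ∧ R p' q'

/-- Backward finite-word simulation (the largest backward finite-word simulation). -/
def BwSim (M : NA A Q₁) (N : NA A Q₂) (p : Q₁) (q : Q₂) : Prop :=
  ∃ R, IsBwSim M N R ∧ R p q

/-- Strict version of a relation: `x ⊏ y` iff `x ⊑ y` and not `y ⊑ x`. -/
def StrictRel (R : Q₁ → Q₁ → Prop) (x y : Q₁) : Prop := R x y ∧ ¬ R y x

/-- Comparing two transitions endpoint-wise; they must carry the same symbol. -/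
def PairRel (Rb Rf : Q₁ → Q₂ → Prop) (t : Q₁ × A × Q₁) (t' : Q₂ × A × Q₂) : Prop :=
  t.2.1 = t'.2.1 ∧ Rb t.1 t'.1 ∧ Rf t.2.2 t'.2.2

/-- Pruned automaton: keep the transitions that are maximal w.r.t. `P`. -/
def prune (M : NA A Q) (P : (Q × A × Q) → (Q × A × Q) → Prop) : NA A Q :=
  ⟨M.ini, M.acc, {t | t ∈ M.trans ∧ ¬ ∃ t' ∈ M.trans, P t t'}⟩

/-- Cross-pruned automaton: remove transitions of `M` subsumed by transitions of `N`. -/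
def pruneAB (M : NA A Q₁) (N : NA A Q₂) (P : (Q₁ × A × Q₁) → (Q₂ × A × Q₂) → Prop) :
    NA A Q₁ :=
  ⟨M.ini, M.acc, {t | t ∈ M.trans ∧ ¬ ∃ t' ∈ N.trans, P t t'}⟩

/-- Saturated automaton: add every transition `S`-below an existing transition. -/
def saturate (M : NA A Q) (S : (Q × A × Q) → (Q × A × Q) → Prop) : NA A Q :=
  ⟨M.ini, M.acc, {t | ∃ t' ∈ M.trans, S t t'}⟩

/-- A transition is transient if it occurs at most once in every trace. -/
def Transient (M : NA A Q) (t : Q × A × Q) : Prop :=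
  ∀ (w : ℕ → A) (π : ℕ → Q), M.InfRun w π →
    ∀ i j, (π i, w i, π (i + 1)) = t → (π j, w j, π (j + 1)) = t → i = j

/-- Equivalence class of `q` w.r.t. the equivalence induced by the preorder `R`. -/
def cls (R : Q → Q → Prop) (q : Q) : Set Q := {x | R q x ∧ R x q}

/-- Quotient automaton by the preorder `R`; equivalence classes are modeled as
the corresponding subsets of `Q`. -/
def quot (M : NA A Q) (R : Q → Q → Prop) : NA A (Set Q) :=
  ⟨{c | ∃ q ∈ M.ini, c = cls R q},
   {c | ∃ q ∈ M.acc, c = cls R q},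
   {t | ∃ q₁ q₂, t.1 = cls R q₁ ∧ t.2.2 = cls R q₂ ∧ (q₁, t.2.1, q₂) ∈ M.trans}⟩

/-- `R`-jumping run: before each transition, jump to an `R`-larger state. -/
def JumpRun (M : NA A Q) (R : Q → Q → Prop) (w : ℕ → A) (π π' : ℕ → Q) : Prop :=
  ∀ i, R (π i) (π' i) ∧ (π' i, w i, π (i + 1)) ∈ M.trans

/-- A jumping run is fair if it is accepting at infinitely many steps. -/
def JumpFair (M : NA A Q) (R : Q → Q → Prop) (π π' : ℕ → Q) : Prop :=
  ∀ n, ∃ m, n ≤ m ∧ ∃ q'' ∈ M.acc, R (π m) q'' ∧ R q'' (π' m)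

end NA

/-- `S(⊑ᵇʷ⁻ᵈⁱ, ⊒ᵇʷ⁻ᵈⁱ)` (backward direct trace inclusion on
sources, its converse on targets) is good for saturation on complete NBAs. -/

private lemma konig_seq {Q : Type*} [Finite Q] (P : ℕ → (ℕ → Q) → Prop)
    (hne : ∀ n, ∃ ρ, P n ρ)
    (hmono : ∀ {n m : ℕ} {ρ}, n ≤ m → P m ρ → P n ρ)
    (hloc : ∀ {n : ℕ} {ρ ρ'}, (∀ i ≤ n, ρ i = ρ' i) → P n ρ → P n ρ') :
    ∃ ρ, ∀ n, P n ρ := by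
  classical
  set Ext : ℕ → (ℕ → Q) → Prop :=
    fun n σ => ∀ m, ∃ ρ, P (max n m) ρ ∧ ∀ i ≤ n, ρ i = σ i with hExt
  have hstep : ∀ n σ, Ext n σ → ∃ q, Ext (n + 1) (Function.update σ (n + 1) q) := by
    intro n σ hσ
    choose ρ hρP hρeq using hσ
    obtain ⟨q, hq⟩ := Finite.exists_infinite_fiber (fun m => ρ m (n + 1))
    have hq' : Set.Infinite ((fun m => ρ m (n + 1)) ⁻¹' {q}) := Set.infinite_coe_iff.mp hq
    refine ⟨q, fun m => ?_⟩
    obtain ⟨m', hm'mem, hm'gt⟩ := hq'.exists_gt (max (n + 1) m)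
    refine ⟨ρ m', hmono (by omega) (hρP m'), ?_⟩
    intro i hi
    rcases Nat.lt_or_ge i (n + 1) with h | h
    · rw [hρeq m' i (Nat.lt_succ_iff.mp h), Function.update_of_ne (by omega)]
    · have : i = n + 1 := le_antisymm hi h
      subst this
      rw [Function.update_self]
      simpa using hm'mem
  have hbase : ∃ σ, Ext 0 σ := by
    choose ρ hρP using hne
    obtain ⟨q, hq⟩ := Finite.exists_infinite_fiber (fun m => ρ m 0)
    have hq' : Set.Infinite ((fun m => ρ m 0) ⁻¹' {q}) := Set.infinite_coe_iff.mp hq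
    refine ⟨fun _ => q, fun m => ?_⟩
    obtain ⟨m', hm'mem, hm'gt⟩ := hq'.exists_gt m
    refine ⟨ρ m', hmono (by omega) (hρP m'), ?_⟩
    intro i hi
    interval_cases i
    simpa using hm'mem
  obtain ⟨σ0, hσ0⟩ := hbase
  let F : (n : ℕ) → {σ : ℕ → Q // Ext n σ} := fun n =>
    Nat.rec ⟨σ0, hσ0⟩
      (fun k ih => ⟨Function.update ih.1 (k + 1) (hstep k ih.1 ih.2).choose,
        (hstep k ih.1 ih.2).choose_spec⟩) n
  have hF1 : ∀ k, (F (k + 1)).1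
      = Function.update (F k).1 (k + 1) (hstep k (F k).1 (F k).2).choose := fun _ => rfl
  have hFagree : ∀ n m, n ≤ m → ∀ i ≤ n, (F m).1 i = (F n).1 i := by
    intro n m hnm
    induction hnm with
    | refl => intro i _; rfl
    | @step m' h ih =>
      intro i hi
      rw [hF1 m', Function.update_of_ne (show i ≠ m' + 1 by have hnm : n ≤ m' := h; omega), ih i hi]
  refine ⟨fun n => (F n).1 n, fun n => ?_⟩
  obtain ⟨ρ, hρ, hagree⟩ := (F n).2 n
  rw [max_self] at hρ
  refine hloc (fun i hi => ?_) hρ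
  rw [hagree i hi]; exact hFagree i n hi i le_rfl

lemma NA.bwDiTraceIncl_refl {A Q : Type*} (M : NA A Q) (p : Q) : M.BwDiTraceIncl M p p :=
  fun _ π h1 h2 h3 => ⟨π, h1, h2, h3, fun _ _ h => h⟩

theorem saturate_bwDiTraceIncl_gfs
    {A Q : Type*} [Fintype A] [Fintype Q] (M : NA A Q) (hM : M.Complete) :
    (M.saturate (NA.PairRel (M.BwDiTraceIncl M)
        (fun r r' => M.BwDiTraceIncl M r' r))).BuchiLang = M.BuchiLang := by
  classical
  apply Set.Subset.antisymm
  · rintro w ⟨π, hini, hrun, hfair⟩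
    have hwit : ∀ n, ∃ p' r', (p', w n, r') ∈ M.trans ∧
        M.BwDiTraceIncl M (π n) p' ∧ M.BwDiTraceIncl M r' (π (n + 1)) := by
      intro n
      obtain ⟨t', ht'δ, heq, hb, hf⟩ := hrun n
      refine ⟨t'.1, t'.2.2, ?_, hb, hf⟩
      have : (t'.1, w n, t'.2.2) = t' := by
        rw [show w n = t'.2.1 from heq]
      rwa [this]
    choose p r hδ hb hf using hwit
    set W : ℕ → List A := fun n => List.ofFn (fun i : Fin n => w i) with hW
    have hWlen : ∀ n, (W n).length = n := fun n => List.length_ofFn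
    have hWget : ∀ n i (h : i < (W n).length), (W n).get ⟨i, h⟩ = w i := by
      intro n i h
      simp [hW, List.get_ofFn]
    have hFR : ∀ n (ρ : ℕ → Q), (∀ i < n, (ρ i, w i, ρ (i + 1)) ∈ M.trans) →
        M.FinRun (W n) ρ := by
      intro n ρ h i hi
      rw [hWget n i hi]
      exact h i (by rw [← hWlen n]; exact hi)
    have hFR' : ∀ n (ρ : ℕ → Q), M.FinRun (W n) ρ →
        ∀ i < n, (ρ i, w i, ρ (i + 1)) ∈ M.trans := by
      intro n ρ h i hi
      have hi' : i < (W n).length := by rw [hWlen n]; exact hi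
      have := h i hi'
      rwa [hWget n i hi'] at this
    have hC : ∀ n, ∃ ρ : ℕ → Q, (ρ 0 ∈ M.ini ∧ (∀ i < n, (ρ i, w i, ρ (i + 1)) ∈ M.trans) ∧
        ∀ i ≤ n, π i ∈ M.acc → ρ i ∈ M.acc) ∧ ρ n = π n := by
      intro n
      induction n with
      | zero =>
        refine ⟨fun _ => π 0, ⟨hini, fun i hi => absurd hi (by omega), ?_⟩, rfl⟩
        intro i hi hacc
        simp only [Nat.le_zero] at hi
        subst hi
        exact hacc
      | succ n ihn =>
        obtain ⟨ρ, ⟨h0, hT, hA⟩, hend⟩ := ihn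
        obtain ⟨τ, hτ0, hτrun, hτend, hτacc⟩ :=
          hb n (W n) ρ h0 (hFR n ρ hT) (by rw [hWlen]; exact hend)
        rw [hWlen] at hτend
        set τ' := Function.update τ (n + 1) (r n) with hτ'
        have hτ'eq : ∀ i ≤ n, τ' i = τ i := by
          intro i hi
          exact Function.update_of_ne (by omega) _ _
        have hτ'run : ∀ i < n + 1, (τ' i, w i, τ' (i + 1)) ∈ M.trans := by
          intro i hi
          rcases Nat.lt_or_ge i n with h | h
          · rw [hτ'eq i (by omega), hτ'eq (i + 1) (by omega)]
            exact hFR' n τ hτrun i h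
          · have hieq : n = i := by omega
            subst hieq
            rw [hτ'eq n le_rfl, hτend]
            have : τ' (n + 1) = r n := Function.update_self _ _ _
            rw [this]
            exact hδ n
        obtain ⟨σ, hσ0, hσrun, hσend, hσacc⟩ :=
          hf n (W (n + 1)) τ' (by rw [hτ'eq 0 (by omega)]; exact hτ0)
            (hFR _ _ hτ'run)
            (by rw [hWlen]; exact Function.update_self _ _ _)
        rw [hWlen] at hσend
        refine ⟨σ, ⟨hσ0, hFR' _ _ hσrun, ?_⟩, hσend⟩
        intro i hi hacc
        rcases Nat.lt_or_ge i (n + 1) with h | h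
        · have h1 : ρ i ∈ M.acc := hA i (by omega) hacc
          have h2 : τ i ∈ M.acc := hτacc i (by rw [hWlen]; omega) h1
          refine hσacc i (by rw [hWlen]; omega) ?_
          rw [hτ'eq i (by omega)]
          exact h2
        · have : i = n + 1 := by omega
          subst this
          rw [hσend]
          exact hacc
    obtain ⟨ρ, hρ⟩ := konig_seq
      (fun n ρ => ρ 0 ∈ M.ini ∧ (∀ i < n, (ρ i, w i, ρ (i + 1)) ∈ M.trans) ∧
        ∀ i ≤ n, π i ∈ M.acc → ρ i ∈ M.acc)
      (fun n => (hC n).imp fun ρ h => h.1)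
      (fun {n m ρ} hnm h => ⟨h.1, fun i hi => h.2.1 i (by omega),
        fun i hi => h.2.2 i (by omega)⟩)
      (fun {n ρ ρ'} hagree h => by
        refine ⟨?_, fun i hi => ?_, fun i hi hacc => ?_⟩
        · rw [← hagree 0 (by omega)]; exact h.1
        · rw [← hagree i (by omega), ← hagree (i + 1) (by omega)]
          exact h.2.1 i hi
        · rw [← hagree i hi]; exact h.2.2 i hi hacc)
    exact ⟨ρ, (hρ 0).1, fun i => (hρ (i + 1)).2.1 i (by omega), fun n => by
      obtain ⟨m, hm, hacc⟩ := hfair n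
      exact ⟨m, hm, (hρ m).2.2 m le_rfl hacc⟩⟩
  · rintro w ⟨π, hini, hrun, hfair⟩
    exact ⟨π, hini, fun i => ⟨(π i, w i, π (i + 1)), hrun i, rfl,
      NA.bwDiTraceIncl_refl M _, NA.bwDiTraceIncl_refl M _⟩, hfair⟩
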